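/- arXiv:2103.16065 — 2 statements merged into one kernel-verified Lean document; each statement's English description precedes it below -/
import Mathlib

section
/- Let M, K and L be skew-symmetric real d×d matrices, let S : ℝ^d × ℝ × ℝ → ℝ be continuously differentiable in its first argument (gradient ∇_z S), and let z : ℝ × ℝ × ℝ → ℝ^d, (x,y,t) ↦ z(x,y,t), be twice continuously differentiable. If M ∂_t z + K ∂_x z + L ∂_y z = ∇_z S(z, x, y) holds everywhere, then ∂_t E + ∂_x F + ∂_y G = 0 holds everywhere, where E = S(z, x, y) − (1/2) zᵀ K ∂_x z − (1/2) zᵀ L ∂_y z, F = (1/2) zᵀ K ∂_t z, and G = (1/2) zᵀ L ∂_t z. -/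
open scoped Matrix

noncomputable def dotCLM {d : ℕ} (g : Fin d → ℝ) : (Fin d → ℝ) →L[ℝ] ℝ :=
  ∑ i : Fin d, g i • (ContinuousLinearMap.proj i : (Fin d → ℝ) →L[ℝ] ℝ)

lemma dotCLM_apply {d : ℕ} (g v : Fin d → ℝ) : dotCLM g v = dotProduct g v := by
  simp [dotCLM, dotProduct]

lemma skew_dot {d : ℕ} {K : Matrix (Fin d) (Fin d) ℝ} (hK : Kᵀ = -K) (a b : Fin d → ℝ) :
    dotProduct a (K.mulVec b) = -dotProduct b (K.mulVec a) := by
  rw [Matrix.dotProduct_mulVec, ← Matrix.mulVec_transpose, hK, Matrix.neg_mulVec,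
    neg_dotProduct, dotProduct_comm]

lemma hasDerivAt_dotK {d : ℕ} (K : Matrix (Fin d) (Fin d) ℝ) {u v : ℝ → Fin d → ℝ}
    {u' v' : Fin d → ℝ} {t : ℝ} (hu : HasDerivAt u u' t) (hv : HasDerivAt v v' t) :
    HasDerivAt (fun τ => dotProduct (u τ) (K.mulVec (v τ)))
      (dotProduct u' (K.mulVec (v t)) + dotProduct (u t) (K.mulVec v')) t := by
  have hui : ∀ i : Fin d, HasDerivAt (fun τ => u τ i) (u' i) t := fun i =>
    (ContinuousLinearMap.proj (R := ℝ) (φ := fun _ : Fin d => ℝ) i).hasFDerivAt.comp_hasDerivAt t hu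
  have hvi : ∀ i : Fin d, HasDerivAt (fun τ => v τ i) (v' i) t := fun i =>
    (ContinuousLinearMap.proj (R := ℝ) (φ := fun _ : Fin d => ℝ) i).hasFDerivAt.comp_hasDerivAt t hv
  have h : HasDerivAt (fun τ => ∑ i : Fin d, ∑ j : Fin d, u τ i * (K i j * v τ j))
      (∑ i : Fin d, ∑ j : Fin d, (u' i * (K i j * v t j) + u t i * (K i j * v' j))) t :=
    HasDerivAt.fun_sum fun i _ => HasDerivAt.fun_sum fun j _ =>
      (hui i).mul ((hvi j).const_mul (K i j))
  have hfun : (fun τ => dotProduct (u τ) (K.mulVec (v τ)))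
      = fun τ => ∑ i : Fin d, ∑ j : Fin d, u τ i * (K i j * v τ j) := by
    funext τ
    simp [dotProduct, Matrix.mulVec, Finset.mul_sum]
  rw [hfun]
  convert h using 1
  simp only [Finset.sum_add_distrib]
  congr 1 <;>
  · simp [dotProduct, Matrix.mulVec, Finset.mul_sum]

theorem stmt1 {d : ℕ} (M K L : Matrix (Fin d) (Fin d) ℝ)
    (hM : Mᵀ = -M) (hK : Kᵀ = -K) (hL : Lᵀ = -L)
    (S : (Fin d → ℝ) → ℝ → ℝ → ℝ) (gradS : (Fin d → ℝ) → ℝ → ℝ → (Fin d → ℝ))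
    (hS : ∀ (x y : ℝ) (w : Fin d → ℝ), HasFDerivAt (fun w' => S w' x y) (dotCLM (gradS w x y)) w)
    (hSc : ∀ x y : ℝ, Continuous fun w => gradS w x y)
    (z : ℝ → ℝ → ℝ → (Fin d → ℝ))
    (hz : ContDiff ℝ 2 fun p : ℝ × ℝ × ℝ => z p.1 p.2.1 p.2.2)
    (zt zx zy : ℝ → ℝ → ℝ → (Fin d → ℝ))
    (hzt : ∀ x y t, zt x y t = deriv (fun τ => z x y τ) t)
    (hzx : ∀ x y t, zx x y t = deriv (fun ξ => z ξ y t) x)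
    (hzy : ∀ x y t, zy x y t = deriv (fun η => z x η t) y)
    (hpde : ∀ x y t,
      M.mulVec (zt x y t) + K.mulVec (zx x y t) + L.mulVec (zy x y t) = gradS (z x y t) x y)
    (E F G : ℝ → ℝ → ℝ → ℝ)
    (hE : ∀ x y t, E x y t = S (z x y t) x y
        - (1/2) * dotProduct (z x y t) (K.mulVec (zx x y t))
        - (1/2) * dotProduct (z x y t) (L.mulVec (zy x y t)))
    (hF : ∀ x y t, F x y t = (1/2) * dotProduct (z x y t) (K.mulVec (zt x y t)))
    (hG : ∀ x y t, G x y t = (1/2) * dotProduct (z x y t) (L.mulVec (zt x y t))) :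
    ∀ x y t,
      deriv (fun τ => E x y τ) t + deriv (fun ξ => F ξ y t) x + deriv (fun η => G x η t) y = 0 := by
  intro x y t
  set f : ℝ × ℝ × ℝ → Fin d → ℝ := fun p => z p.1 p.2.1 p.2.2 with hfdef
  have hfd : Differentiable ℝ f := hz.differentiable two_ne_zero
  have hΦc : ContDiff ℝ 1 (fderiv ℝ f) := hz.fderiv_right le_rfl
  have hΦd : Differentiable ℝ (fderiv ℝ f) := hΦc.differentiable one_ne_zero
  set e1 : ℝ × ℝ × ℝ := (1, 0, 0) with he1
  set e2 : ℝ × ℝ × ℝ := (0, 1, 0) with he2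
  set e3 : ℝ × ℝ × ℝ := (0, 0, 1) with he3
  -- line maps
  have hι1 : ∀ a b c : ℝ, HasDerivAt (fun ξ => ((ξ, b, c) : ℝ × ℝ × ℝ)) e1 a := fun a b c =>
    HasDerivAt.prodMk (hasDerivAt_id a) (HasDerivAt.prodMk (hasDerivAt_const a b) (hasDerivAt_const a c))
  have hι2 : ∀ a b c : ℝ, HasDerivAt (fun η => ((a, η, c) : ℝ × ℝ × ℝ)) e2 b := fun a b c =>
    HasDerivAt.prodMk (hasDerivAt_const b a) (HasDerivAt.prodMk (hasDerivAt_id b) (hasDerivAt_const b c))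
  have hι3 : ∀ a b c : ℝ, HasDerivAt (fun τ => ((a, b, τ) : ℝ × ℝ × ℝ)) e3 c := fun a b c =>
    HasDerivAt.prodMk (hasDerivAt_const c a) (HasDerivAt.prodMk (hasDerivAt_const c b) (hasDerivAt_id c))
  -- first derivatives along lines
  have hf1 : ∀ a b c : ℝ, HasDerivAt (fun ξ => f (ξ, b, c)) (fderiv ℝ f (a, b, c) e1) a :=
    fun a b c => by have := (hfd (a, b, c)).hasFDerivAt.comp_hasDerivAt a (hι1 a b c); exact this
  have hf2 : ∀ a b c : ℝ, HasDerivAt (fun η => f (a, η, c)) (fderiv ℝ f (a, b, c) e2) b :=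
    fun a b c => by have := (hfd (a, b, c)).hasFDerivAt.comp_hasDerivAt b (hι2 a b c); exact this
  have hf3 : ∀ a b c : ℝ, HasDerivAt (fun τ => f (a, b, τ)) (fderiv ℝ f (a, b, c) e3) c :=
    fun a b c => by have := (hfd (a, b, c)).hasFDerivAt.comp_hasDerivAt c (hι3 a b c); exact this
  have hzx' : ∀ a b c : ℝ, zx a b c = fderiv ℝ f (a, b, c) e1 := fun a b c => by
    rw [hzx]; exact (hf1 a b c).deriv
  have hzy' : ∀ a b c : ℝ, zy a b c = fderiv ℝ f (a, b, c) e2 := fun a b c => by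
    rw [hzy]; exact (hf2 a b c).deriv
  have hzt' : ∀ a b c : ℝ, zt a b c = fderiv ℝ f (a, b, c) e3 := fun a b c => by
    rw [hzt]; exact (hf3 a b c).deriv
  set p : ℝ × ℝ × ℝ := (x, y, t) with hp
  set A : (ℝ × ℝ × ℝ) →L[ℝ] (Fin d → ℝ) := fderiv ℝ f p with hA
  set D2 := fderiv ℝ (fderiv ℝ f) p with hD2
  have hsym : ∀ v w : ℝ × ℝ × ℝ, D2 v w = D2 w v := fun v w =>
    (hz.contDiffAt.isSymmSndFDerivAt (by norm_num)).eq v w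
  -- second derivs along lines of the evaluated fderiv
  have hΦ3 : ∀ e : ℝ × ℝ × ℝ,
      HasDerivAt (fun τ => fderiv ℝ f (x, y, τ) e) (D2 e3 e) t := fun e =>
    (ContinuousLinearMap.apply ℝ (Fin d → ℝ) e).hasFDerivAt.comp_hasDerivAt t
      ((hΦd p).hasFDerivAt.comp_hasDerivAt t (hι3 x y t))
  have hΦ1 : ∀ e : ℝ × ℝ × ℝ,
      HasDerivAt (fun ξ => fderiv ℝ f (ξ, y, t) e) (D2 e1 e) x := fun e =>
    (ContinuousLinearMap.apply ℝ (Fin d → ℝ) e).hasFDerivAt.comp_hasDerivAt x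
      ((hΦd p).hasFDerivAt.comp_hasDerivAt x (hι1 x y t))
  have hΦ2 : ∀ e : ℝ × ℝ × ℝ,
      HasDerivAt (fun η => fderiv ℝ f (x, η, t) e) (D2 e2 e) y := fun e =>
    (ContinuousLinearMap.apply ℝ (Fin d → ℝ) e).hasFDerivAt.comp_hasDerivAt y
      ((hΦd p).hasFDerivAt.comp_hasDerivAt y (hι2 x y t))
  -- derivative of E in t
  have hSd : HasDerivAt (fun τ => S (f (x, y, τ)) x y)
      (dotProduct (gradS (f p) x y) (A e3)) t := by
    have := (hS x y (f p)).comp_hasDerivAt t (hf3 x y t)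
    rwa [dotCLM_apply] at this
  have hEK : HasDerivAt (fun τ => dotProduct (f (x, y, τ))
        (K.mulVec (fderiv ℝ f (x, y, τ) e1)))
      (dotProduct (A e3) (K.mulVec (A e1))
        + dotProduct (f p) (K.mulVec (D2 e3 e1))) t :=
    hasDerivAt_dotK K (hf3 x y t) (hΦ3 e1)
  have hEL : HasDerivAt (fun τ => dotProduct (f (x, y, τ))
        (L.mulVec (fderiv ℝ f (x, y, τ) e2)))
      (dotProduct (A e3) (L.mulVec (A e2))
        + dotProduct (f p) (L.mulVec (D2 e3 e2))) t :=
    hasDerivAt_dotK L (hf3 x y t) (hΦ3 e2)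
  have hEfun : (fun τ => E x y τ) = fun τ => S (f (x, y, τ)) x y
      - (1/2) * dotProduct (f (x, y, τ)) (K.mulVec (fderiv ℝ f (x, y, τ) e1))
      - (1/2) * dotProduct (f (x, y, τ)) (L.mulVec (fderiv ℝ f (x, y, τ) e2)) := by
    funext τ
    rw [hE, hzx' x y τ, hzy' x y τ]
  have hdE : deriv (fun τ => E x y τ) t
      = dotProduct (gradS (f p) x y) (A e3)
        - (1/2) * (dotProduct (A e3) (K.mulVec (A e1))
            + dotProduct (f p) (K.mulVec (D2 e3 e1)))
        - (1/2) * (dotProduct (A e3) (L.mulVec (A e2))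
            + dotProduct (f p) (L.mulVec (D2 e3 e2))) := by
    rw [hEfun]
    exact ((hSd.sub (hEK.const_mul (1/2))).sub (hEL.const_mul (1/2))).deriv
  -- derivative of F in x
  have hFfun : (fun ξ => F ξ y t) = fun ξ =>
      (1/2) * dotProduct (f (ξ, y, t)) (K.mulVec (fderiv ℝ f (ξ, y, t) e3)) := by
    funext ξ
    rw [hF, hzt' ξ y t]
  have hdF : deriv (fun ξ => F ξ y t) x
      = (1/2) * (dotProduct (A e1) (K.mulVec (A e3))
          + dotProduct (f p) (K.mulVec (D2 e1 e3))) := by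
    rw [hFfun]
    exact ((hasDerivAt_dotK K (hf1 x y t) (hΦ1 e3)).const_mul (1/2)).deriv
  -- derivative of G in y
  have hGfun : (fun η => G x η t) = fun η =>
      (1/2) * dotProduct (f (x, η, t)) (L.mulVec (fderiv ℝ f (x, η, t) e3)) := by
    funext η
    rw [hG, hzt' x η t]
  have hdG : deriv (fun η => G x η t) y
      = (1/2) * (dotProduct (A e2) (L.mulVec (A e3))
          + dotProduct (f p) (L.mulVec (D2 e2 e3))) := by
    rw [hGfun]
    exact ((hasDerivAt_dotK L (hf2 x y t) (hΦ2 e3)).const_mul (1/2)).deriv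
  -- algebra
  have hgrad : gradS (f p) x y
      = M.mulVec (A e3) + K.mulVec (A e1) + L.mulVec (A e2) := by
    rw [← hpde x y t, hzt' x y t, hzx' x y t, hzy' x y t]
  rw [hdE, hdF, hdG, hgrad, hsym e1 e3, hsym e2 e3]
  have h1 : dotProduct (A e3) (M.mulVec (A e3)) = 0 := by
    have := skew_dot hM (A e3) (A e3); linarith
  have h2 := skew_dot hK (A e3) (A e1)
  have h3 := skew_dot hL (A e3) (A e2)
  rw [add_dotProduct, add_dotProduct,
    dotProduct_comm (M.mulVec _), dotProduct_comm (K.mulVec _),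
    dotProduct_comm (L.mulVec _)]
  linarith
end

section
/- Assume the CRK setup. Let Δt ∈ ℝ, let K be any real d×d matrix, let D be a real N×N matrix, and for j = 0, …, N−1 let δ_t z_j : [0,1] → ℝ^d be continuous, z_j⁰ ∈ ℝ^d, and z_j(τ) = z_j⁰ + Δt ∫₀¹ A_{τ,σ} δ_t z_j(σ) dσ. Define δ_x z_j(τ) = Σ_{k=0}^{N−1} D_{jk} z_k(τ) and δ_x δ_t z_j(τ) = Σ_{k=0}^{N−1} D_{jk} δ_t z_k(τ). Then for every j, z_j(1)ᵀ K δ_x z_j(1) − z_j(0)ᵀ K δ_x z_j(0) = Δt Σ_{i=1}^s b_i ⟨δ_t z_j⟩_iᵀ K ⟨δ_x z_j⟩_i + Δt Σ_{i=1}^s b_i ⟨z_j⟩_iᵀ K ⟨δ_x δ_t z_j⟩_i. -/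
open scoped Matrix

noncomputable def lag {s : ℕ} (c : Fin s → ℝ) (i : Fin s) (τ : ℝ) : ℝ :=
  (Lagrange.basis (Finset.univ : Finset (Fin s)) c i).eval τ

noncomputable def bw {s : ℕ} (c : Fin s → ℝ) (i : Fin s) : ℝ :=
  ∫ τ in (0:ℝ)..1, lag c i τ

noncomputable def Acrk {s : ℕ} (c : Fin s → ℝ) (τ σ : ℝ) : ℝ :=
  ∑ i : Fin s, (1 / bw c i) * (∫ α in (0:ℝ)..τ, lag c i α) * lag c i σ

noncomputable def wavg {s : ℕ} (c : Fin s → ℝ) (i : Fin s) {G : Type*}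
    [NormedAddCommGroup G] [NormedSpace ℝ G] (f : ℝ → G) : G :=
  (1 / bw c i) • ∫ τ in (0:ℝ)..1, lag c i τ • f τ

lemma lag_cont {s : ℕ} (c : Fin s → ℝ) (i : Fin s) : Continuous (lag c i) :=
  (Lagrange.basis (Finset.univ : Finset (Fin s)) c i).continuous

noncomputable def Fint {s : ℕ} (c : Fin s → ℝ) (i : Fin s) (τ : ℝ) : ℝ :=
  ∫ α in (0:ℝ)..τ, lag c i α

lemma Fint_hasDerivAt {s : ℕ} (c : Fin s → ℝ) (i : Fin s) (τ : ℝ) :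
    HasDerivAt (Fint c i) (lag c i τ) τ :=
  (lag_cont c i).integral_hasStrictDerivAt 0 τ |>.hasDerivAt

lemma Fint_cont {s : ℕ} (c : Fin s → ℝ) (i : Fin s) : Continuous (Fint c i) := by
  have := fun τ => (Fint_hasDerivAt c i τ).continuousAt
  exact continuous_iff_continuousAt.2 this

lemma Fint_one {s : ℕ} (c : Fin s → ℝ) (i : Fin s) : Fint c i 1 = bw c i := rfl

lemma Fint_zero {s : ℕ} (c : Fin s → ℝ) (i : Fin s) : Fint c i 0 = 0 :=
  intervalIntegral.integral_same

lemma ibp {s : ℕ} (c : Fin s → ℝ) (i m : Fin s) :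
    (∫ τ in (0:ℝ)..1, lag c i τ * Fint c m τ) + (∫ τ in (0:ℝ)..1, lag c m τ * Fint c i τ)
      = bw c i * bw c m := by
  have hd : ∀ τ : ℝ, HasDerivAt (fun τ => Fint c i τ * Fint c m τ)
      (lag c i τ * Fint c m τ + lag c m τ * Fint c i τ) τ := by
    intro τ
    have : HasDerivAt (fun τ => Fint c i τ * Fint c m τ)
        (lag c i τ * Fint c m τ + Fint c i τ * lag c m τ) τ :=
      (Fint_hasDerivAt c i τ).mul (Fint_hasDerivAt c m τ)
    convert this using 1; ring
  have hcont : Continuous fun τ => lag c i τ * Fint c m τ + lag c m τ * Fint c i τ :=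
    (((lag_cont c i).mul (Fint_cont c m))).add (((lag_cont c m).mul (Fint_cont c i)))
  have := intervalIntegral.integral_eq_sub_of_hasDerivAt (a := (0:ℝ)) (b := 1)
    (fun τ _ => hd τ) (hcont.intervalIntegrable 0 1)
  rw [intervalIntegral.integral_add (f := fun τ => lag c i τ * Fint c m τ)
    (g := fun τ => lag c m τ * Fint c i τ) ((((lag_cont c i).mul (Fint_cont c m))).intervalIntegrable 0 1)
    ((((lag_cont c m).mul (Fint_cont c i))).intervalIntegrable 0 1)] at this
  rw [this, Fint_one, Fint_one, Fint_zero]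
  ring

noncomputable def aa {s : ℕ} (c : Fin s → ℝ) (i m : Fin s) : ℝ :=
  (1 / bw c i) * ∫ τ in (0:ℝ)..1, lag c i τ * Fint c m τ

lemma aa_key {s : ℕ} (c : Fin s → ℝ) (hb : ∀ i, bw c i ≠ 0) (i m : Fin s) :
    bw c i * aa c i m + bw c m * aa c m i = bw c i * bw c m := by
  have e1 : bw c i * aa c i m = ∫ τ in (0:ℝ)..1, lag c i τ * Fint c m τ := by
    unfold aa; rw [← mul_assoc, mul_one_div_cancel (hb i), one_mul]
  have e2 : bw c m * aa c m i = ∫ τ in (0:ℝ)..1, lag c m τ * Fint c i τ := by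
    unfold aa; rw [← mul_assoc, mul_one_div_cancel (hb m), one_mul]
  rw [e1, e2]; exact ibp c i m

lemma key_ii {s d : ℕ} (c : Fin s → ℝ) (i : Fin s) (f : ℝ → Fin d → ℝ)
    (hf : ContinuousOn f (Set.Icc 0 1)) :
    IntervalIntegrable (fun σ => lag c i σ • f σ) MeasureTheory.volume 0 1 := by
  apply ContinuousOn.intervalIntegrable
  rw [Set.uIcc_of_le (by norm_num : (0:ℝ) ≤ 1)]
  exact ((lag_cont c i).continuousOn).smul hf

lemma int_rep {s d : ℕ} (c : Fin s → ℝ) (τ : ℝ) (f : ℝ → Fin d → ℝ)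
    (hf : ContinuousOn f (Set.Icc 0 1)) :
    (∫ σ in (0:ℝ)..1, Acrk c τ σ • f σ) = ∑ i, Fint c i τ • wavg c i f := by
  have h1 : (fun σ => Acrk c τ σ • f σ)
      = fun σ => ∑ i, ((1 / bw c i) * Fint c i τ) • (lag c i σ • f σ) := by
    funext σ
    simp only [Acrk, Finset.sum_smul, smul_smul, Fint, mul_assoc]
  have hInt : ∀ i : Fin s, i ∈ Finset.univ → IntervalIntegrable
      (fun σ => ((1 / bw c i) * Fint c i τ) • (lag c i σ • f σ)) MeasureTheory.volume 0 1 := by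
    intro i _
    apply ContinuousOn.intervalIntegrable
    rw [Set.uIcc_of_le (by norm_num : (0:ℝ) ≤ 1)]
    exact (continuousOn_const (c := (1 / bw c i) * Fint c i τ)).smul (((lag_cont c i).continuousOn).smul hf)
  rw [h1, intervalIntegral.integral_finset_sum hInt]
  refine Finset.sum_congr rfl fun i _ => ?_
  rw [intervalIntegral.integral_smul, wavg, smul_smul,
    mul_comm (1 / bw c i) (Fint c i τ)]

set_option maxHeartbeats 1000000 in
lemma wavg_affine {s d : ℕ} (c : Fin s → ℝ) (i : Fin s) (hb : bw c i ≠ 0)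
    (x0 : Fin d → ℝ) (Δt : ℝ) (u : Fin s → Fin d → ℝ) :
    wavg c i (fun τ => x0 + Δt • ∑ m, Fint c m τ • u m)
      = x0 + Δt • ∑ m, aa c i m • u m := by
  unfold wavg
  have h1 : (fun τ => lag c i τ • (x0 + Δt • ∑ m, Fint c m τ • u m))
      = fun τ => lag c i τ • x0 + ∑ m, (Δt * (lag c i τ * Fint c m τ)) • u m := by
    funext τ
    rw [smul_add, Finset.smul_sum, Finset.smul_sum]
    congr 1
    refine Finset.sum_congr rfl fun m _ => ?_
    rw [smul_smul, smul_smul]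
    congr 1
    ring
  have hI1 : IntervalIntegrable (fun τ => lag c i τ • x0) MeasureTheory.volume 0 1 :=
    ((lag_cont c i).continuousOn.smul continuousOn_const).intervalIntegrable
  have hIm : ∀ m : Fin s, m ∈ Finset.univ → IntervalIntegrable
      (fun τ => (Δt * (lag c i τ * Fint c m τ)) • u m) MeasureTheory.volume 0 1 := by
    intro m _
    exact ((continuous_const.mul ((lag_cont c i).mul
      (Fint_cont c m))).continuousOn.smul continuousOn_const).intervalIntegrable
  have hI2 : IntervalIntegrable (fun τ => ∑ m : Fin s, (Δt * (lag c i τ * Fint c m τ)) • u m)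
      MeasureTheory.volume 0 1 := by
    apply Continuous.intervalIntegrable
    exact continuous_finset_sum _ fun m _ => (continuous_const.mul ((lag_cont c i).mul
      (Fint_cont c m))).smul continuous_const
  have h2 : ∀ m : Fin s, (∫ τ in (0:ℝ)..1, (Δt * (lag c i τ * Fint c m τ)) • u m)
      = (Δt * ∫ τ in (0:ℝ)..1, lag c i τ * Fint c m τ) • u m := by
    intro m
    rw [intervalIntegral.integral_smul_const, intervalIntegral.integral_const_mul]
  rw [h1, intervalIntegral.integral_add hI1 hI2, intervalIntegral.integral_finset_sum hIm,
    intervalIntegral.integral_smul_const]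
  simp only [h2]
  rw [smul_add, smul_smul, show (∫ τ in (0:ℝ)..1, lag c i τ) = bw c i from rfl,
    one_div_mul_cancel hb, one_smul, Finset.smul_sum, Finset.smul_sum]
  congr 1
  refine Finset.sum_congr rfl fun m _ => ?_
  rw [smul_smul, smul_smul]
  congr 1
  unfold aa; ring

lemma wavg_lincomb {s d N : ℕ} (c : Fin s → ℝ) (i : Fin s)
    (f : Fin N → ℝ → Fin d → ℝ) (hf : ∀ k, ContinuousOn (f k) (Set.Icc 0 1))
    (Dv : Fin N → ℝ) :
    wavg c i (fun τ => ∑ k, Dv k • f k τ) = ∑ k, Dv k • wavg c i (f k) := by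
  unfold wavg
  have h1 : (fun τ => lag c i τ • ∑ k, Dv k • f k τ)
      = fun τ => ∑ k, Dv k • (lag c i τ • f k τ) := by
    funext τ
    rw [Finset.smul_sum]
    exact Finset.sum_congr rfl fun k _ => smul_comm _ _ _
  have hInt : ∀ k : Fin N, k ∈ Finset.univ → IntervalIntegrable
      (fun τ => Dv k • (lag c i τ • f k τ)) MeasureTheory.volume 0 1 := by
    intro k _
    apply ContinuousOn.intervalIntegrable
    rw [Set.uIcc_of_le (by norm_num : (0:ℝ) ≤ 1)]
    exact (continuousOn_const (c := Dv k)).smul (((lag_cont c i).continuousOn).smul (hf k))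
  rw [h1, intervalIntegral.integral_finset_sum hInt, Finset.smul_sum]
  refine Finset.sum_congr rfl fun k _ => ?_
  rw [intervalIntegral.integral_smul, smul_comm]

lemma final_alg {s d : ℕ} (K : Matrix (Fin d) (Fin d) ℝ) (Δt : ℝ)
    (b : Fin s → ℝ) (a : Fin s → Fin s → ℝ)
    (hab : ∀ i m, b i * a i m + b m * a m i = b i * b m)
    (x0 w0 : Fin d → ℝ) (u v : Fin s → Fin d → ℝ) :
    dotProduct (x0 + Δt • ∑ m, b m • u m) (K.mulVec (w0 + Δt • ∑ m, b m • v m))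
      - dotProduct x0 (K.mulVec w0)
    = Δt * ∑ i, b i * dotProduct (u i) (K.mulVec (w0 + Δt • ∑ m, a i m • v m))
      + Δt * ∑ i, b i * dotProduct (x0 + Δt • ∑ m, a i m • u m) (K.mulVec (v i)) := by
  have key : ∑ x : Fin s, ∑ y : Fin s, Δt * (b x * (Δt * (b y * (u y ⬝ᵥ K *ᵥ v x))))
      = (∑ x : Fin s, ∑ y : Fin s, Δt * (b x * (Δt * (a x y * (u x ⬝ᵥ K *ᵥ v y)))))
        + ∑ x : Fin s, ∑ y : Fin s, Δt * (b x * (Δt * (a x y * (u y ⬝ᵥ K *ᵥ v x)))) := by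
    rw [Finset.sum_comm (f := fun x y => Δt * (b x * (Δt * (b y * (u y ⬝ᵥ K *ᵥ v x))))),
      Finset.sum_comm (f := fun x y => Δt * (b x * (Δt * (a x y * (u y ⬝ᵥ K *ᵥ v x))))),
      ← Finset.sum_add_distrib]
    refine Finset.sum_congr rfl fun x _ => ?_
    rw [← Finset.sum_add_distrib]
    refine Finset.sum_congr rfl fun y _ => ?_
    linear_combination (-(Δt * Δt * (u x ⬝ᵥ K *ᵥ v y))) * hab x y
    
  have hmv : ∀ f : Fin s → Fin d → ℝ, K *ᵥ (∑ m, f m) = ∑ m, K *ᵥ f m := by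
    intro f
    ext i
    simp [Matrix.mulVec, dotProduct, Finset.mul_sum, Finset.sum_apply]
    rw [Finset.sum_comm]
  have hsum_r : ∀ (x : Fin d → ℝ) (f : Fin s → Fin d → ℝ),
      x ⬝ᵥ (∑ m, f m) = ∑ m, x ⬝ᵥ f m := by
    intro x f
    simp [dotProduct, Finset.mul_sum]
    rw [Finset.sum_comm]
  have hsum_l : ∀ (x : Fin d → ℝ) (f : Fin s → Fin d → ℝ),
      (∑ m, f m) ⬝ᵥ x = ∑ m, f m ⬝ᵥ x := by
    intro x f
    simp [dotProduct, Finset.sum_mul]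
    rw [Finset.sum_comm]
  simp only [Matrix.mulVec_add, Matrix.mulVec_smul, hmv, dotProduct_add,
    add_dotProduct, dotProduct_smul, smul_dotProduct, hsum_r, hsum_l,
    smul_eq_mul, Finset.mul_sum, Finset.sum_mul, mul_add, add_mul, Finset.sum_add_distrib]
  linarith [key]

theorem stmt5 {s d N : ℕ} (hs : 1 ≤ s) (c : Fin s → ℝ) (hc : Function.Injective c)
    (hb : ∀ i, bw c i ≠ 0)
    (Δt : ℝ) (K : Matrix (Fin d) (Fin d) ℝ) (D : Matrix (Fin N) (Fin N) ℝ)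
    (δtz : Fin N → ℝ → (Fin d → ℝ)) (hδtc : ∀ j, ContinuousOn (δtz j) (Set.Icc 0 1))
    (z0 : Fin N → Fin d → ℝ) (z : Fin N → ℝ → (Fin d → ℝ))
    (hz : ∀ j τ, z j τ = z0 j + Δt • ∫ σ in (0:ℝ)..1, Acrk c τ σ • δtz j σ)
    (δxz : Fin N → ℝ → (Fin d → ℝ))
    (hδx : ∀ j τ, δxz j τ = ∑ k, D j k • z k τ)
    (δxδtz : Fin N → ℝ → (Fin d → ℝ))
    (hδxδt : ∀ j τ, δxδtz j τ = ∑ k, D j k • δtz k τ) :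
    ∀ j, dotProduct (z j 1) (K.mulVec (δxz j 1))
        - dotProduct (z j 0) (K.mulVec (δxz j 0))
      = Δt * ∑ i, bw c i * dotProduct (wavg c i (δtz j)) (K.mulVec (wavg c i (δxz j)))
        + Δt * ∑ i, bw c i * dotProduct (wavg c i (z j)) (K.mulVec (wavg c i (δxδtz j))) := by
  intro j
  have hFz : ∀ k (τ : ℝ), z k τ = z0 k + Δt • ∑ m, Fint c m τ • wavg c m (δtz k) := by
    intro k τ
    rw [hz k τ, int_rep c τ (δtz k) (hδtc k)]
  have hδxzf : ∀ τ : ℝ, δxz j τ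
      = (∑ k, D j k • z0 k) + Δt • ∑ m, Fint c m τ • ∑ k, D j k • wavg c m (δtz k) := by
    intro τ
    rw [hδx j τ]
    simp only [hFz, smul_add]
    rw [Finset.sum_add_distrib]
    congr 1
    have h1 : ∀ k : Fin N, D j k • Δt • ∑ m, Fint c m τ • wavg c m (δtz k)
        = Δt • D j k • ∑ m, Fint c m τ • wavg c m (δtz k) := fun k => smul_comm _ _ _
    simp only [h1]
    rw [← Finset.smul_sum]
    congr 1
    simp only [Finset.smul_sum]
    rw [Finset.sum_comm]
    exact Finset.sum_congr rfl fun m _ => Finset.sum_congr rfl fun k _ => smul_comm _ _ _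
  have hzj : z j = fun τ => z0 j + Δt • ∑ m, Fint c m τ • wavg c m (δtz j) :=
    funext (hFz j)
  have hxj : δxz j = fun τ => (∑ k, D j k • z0 k)
      + Δt • ∑ m, Fint c m τ • ∑ k, D j k • wavg c m (δtz k) := funext hδxzf
  have hwz : ∀ i, wavg c i (z j) = z0 j + Δt • ∑ m, aa c i m • wavg c m (δtz j) := by
    intro i; rw [hzj]; exact wavg_affine c i (hb i) _ _ _
  have hwx : ∀ i, wavg c i (δxz j) = (∑ k, D j k • z0 k)
      + Δt • ∑ m, aa c i m • ∑ k, D j k • wavg c m (δtz k) := by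
    intro i; rw [hxj]; exact wavg_affine c i (hb i) _ _ _
  have hwdt : ∀ i, wavg c i (δxδtz j) = ∑ k, D j k • wavg c i (δtz k) := by
    intro i
    rw [show δxδtz j = fun τ => ∑ k, D j k • δtz k τ from funext (hδxδt j)]
    exact wavg_lincomb c i δtz hδtc (D j)
  have hz1 : z j 1 = z0 j + Δt • ∑ m, bw c m • wavg c m (δtz j) := by
    rw [hFz j 1]; simp only [Fint_one]
  have hz0 : z j 0 = z0 j := by
    rw [hFz j 0]; simp [Fint_zero]
  have hx1 : δxz j 1 = (∑ k, D j k • z0 k)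
      + Δt • ∑ m, bw c m • ∑ k, D j k • wavg c m (δtz k) := by
    rw [hδxzf 1]; simp only [Fint_one]
  have hx0 : δxz j 0 = (∑ k, D j k • z0 k) := by
    rw [hδxzf 0]; simp [Fint_zero]
  rw [hz1, hz0, hx1, hx0]
  simp only [hwz, hwx, hwdt]
  exact final_alg K Δt (bw c) (aa c) (aa_key c hb) (z0 j) (∑ k, D j k • z0 k)
    (fun m => wavg c m (δtz j)) (fun m => ∑ k, D j k • wavg c m (δtz k))
end
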